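/- arXiv:1807.00127 — 2 statements merged into one kernel-verified Lean document; each statement's English description precedes it below -/
import Mathlib

section
/- Let n ≥ 2, 1 < p < n, θ > 1, σ with 0 ≤ 1/θ − 1/σ ≤ 1/n, p* = np/(n−p), q = 1 + ((n−p)/p)(θ/(θ−1)), and R > 0. For a radially symmetric nonnegative measurable function u on B_R, setting v(y) = u(x) under the transformation y = R(−(q−1) log_q(|x|/R))^{−1/(q−1)} x/|x|, one has ∫_{R^n} |y|^{nσ/p* − n} v(y)^σ dy = ∫_{B_R} |x|^{nσ/p* − n} u(x)^σ / [(q−1) log_q(R/|x|)]^{1 + σ(θ−1)/θ} dx. -/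
open MeasureTheory Set

/-- The q-logarithm `log_q r = (r^(1-q) - 1)/(1-q)`. -/
noncomputable def logq (q r : ℝ) : ℝ := (r ^ (1 - q) - 1) / (1 - q)

/-- The inverse of the transformation `x ↦ y = R(−(q−1) log_q(‖x‖/R))^{−1/(q−1)} x/‖x‖`,
    namely `y ↦ x = R(1 + (‖y‖/R)^{1−q})^{1/(1−q)} y/‖y‖`. -/
noncomputable def invTrans (n : ℕ) (q R : ℝ) (y : EuclideanSpace ℝ (Fin n)) :
    EuclideanSpace ℝ (Fin n) :=
  (R * (1 + (‖y‖ / R) ^ (1 - q)) ^ (1 / (1 - q)) * ‖y‖⁻¹) • y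

private lemma pw_core (r R t q c β d : ℝ) (hr : 0 < r) (hR : 0 < R) (ht : 0 < t)
    (hE1 : c - 1 + c * d = -β) (hE2 : β * (q - 1) = d + q) :
    t ^ (c - 1) * (r / R) ^ (-q) * (R * t ^ c) ^ d
      = r ^ d / (t * (r / R) ^ (q - 1)) ^ β := by
  have hw : 0 < r / R := div_pos hr hR
  have htc : 0 < t ^ c := Real.rpow_pos_of_pos ht c
  have h4 : (R * t ^ c) ^ d = Real.exp ((Real.log R + Real.log t * c) * d) := by
    rw [Real.rpow_def_of_pos (mul_pos hR htc), Real.log_mul hR.ne' htc.ne',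
      Real.log_rpow ht]; ring_nf
  have hw2 : 0 < (r / R) ^ (q - 1) := Real.rpow_pos_of_pos hw _
  have h5 : (t * (r / R) ^ (q - 1)) ^ β
      = Real.exp ((Real.log t + Real.log (r / R) * (q - 1)) * β) := by
    rw [Real.rpow_def_of_pos (mul_pos ht hw2), Real.log_mul ht.ne' hw2.ne',
      Real.log_rpow hw]; ring_nf
  rw [h4, h5, Real.rpow_def_of_pos ht, Real.rpow_def_of_pos hw, Real.rpow_def_of_pos hr,
    ← Real.exp_add, ← Real.exp_add, ← Real.exp_sub, Real.exp_eq_exp,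
    Real.log_div hr.ne' hR.ne']
  linear_combination Real.log t * hE1 + (Real.log r - Real.log R) * hE2

private lemma pw_aux (r R t q c β d Uσ : ℝ) (hr : 0 < r) (hR : 0 < R) (ht : 0 < t)
    (hE1 : c - 1 + c * d = -β) (hE2 : β * (q - 1) = d + q) :
    t ^ (c - 1) * (r / R) ^ (-q) * ((R * t ^ c) ^ d * Uσ)
      = r ^ d * (Uσ / (t * (r / R) ^ (q - 1)) ^ β) := by
  linear_combination Uσ * pw_core r R t q c β d hr hR ht hE1 hE2

/-- Change of variables for the weighted `σ`-norm: with
    `q = 1 + ((n−p)/p)(θ/(θ−1))`, `p* = np/(n−p)`, `v(y) = u(x)` under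
    `y = R(−(q−1)log_q(‖x‖/R))^{−1/(q−1)} x/‖x‖`, for radial nonnegative measurable `u`:
    `∫_{ℝⁿ} ‖y‖^{nσ/p*−n} v(y)^σ dy
      = ∫_{B_R} ‖x‖^{nσ/p*−n} u(x)^σ/[(q−1)log_q(R/‖x‖)]^{1+σ(θ−1)/θ} dx`. -/
theorem stmt_14 (n : ℕ) (hn : 2 ≤ n) (p θ σ R pstar q : ℝ) (hp1 : 1 < p) (hpn : p < n)
    (hθ : 1 < θ) (hσ0 : 0 ≤ 1 / θ - 1 / σ) (hσn : 1 / θ - 1 / σ ≤ 1 / (n : ℝ))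
    (hR : 0 < R) (hpstar : pstar = (n : ℝ) * p / ((n : ℝ) - p))
    (hq : q = 1 + (((n : ℝ) - p) / p) * (θ / (θ - 1)))
    (u : EuclideanSpace ℝ (Fin n) → ℝ) (hmeas : Measurable u) (hpos : ∀ x, 0 ≤ u x)
    (hrad : ∀ x y : EuclideanSpace ℝ (Fin n), ‖x‖ = ‖y‖ → u x = u y)
    (v : EuclideanSpace ℝ (Fin n) → ℝ)
    (hv : ∀ y : EuclideanSpace ℝ (Fin n), y ≠ 0 → v y = u (invTrans n q R y)) :
    ∫ y : EuclideanSpace ℝ (Fin n), ‖y‖ ^ ((n : ℝ) * σ / pstar - n) * v y ^ σ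
      = ∫ x in Metric.ball (0 : EuclideanSpace ℝ (Fin n)) R,
          ‖x‖ ^ ((n : ℝ) * σ / pstar - n) * u x ^ σ
            / ((q - 1) * logq q (R / ‖x‖)) ^ (1 + σ * (θ - 1) / θ) := by
  classical
  haveI : Nonempty (Fin n) := ⟨⟨0, by omega⟩⟩
  have hn1 : (1:ℝ) < (n:ℝ) := by exact_mod_cast (by omega : 1 < n)
  have hp0 : (0:ℝ) < p := by linarith
  have hnp : (0:ℝ) < (n:ℝ) - p := sub_pos.2 hpn
  have hθ0 : (0:ℝ) < θ := by linarith
  have hθ1 : (0:ℝ) < θ - 1 := sub_pos.2 hθ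
  have hq1 : 1 < q := by
    have h1 : 0 < ((n:ℝ) - p)/p := div_pos hnp hp0
    have h2 : 0 < θ/(θ-1) := div_pos hθ0 hθ1
    nlinarith [hq]
  have h1q : 1 - q < 0 := by linarith
  have h1qne : (1:ℝ) - q ≠ 0 := ne_of_lt h1q
  set c : ℝ := 1 / (1 - q) with hc
  have hcneg : c < 0 := by rw [hc]; exact div_neg_of_pos_of_neg one_pos h1q
  have hc1q : c * (1 - q) = 1 := by rw [hc]; field_simp
  have hc1q' : (1 - q) * c = 1 := by rw [mul_comm]; exact hc1q
  set α : ℝ := (n : ℝ) * σ / pstar - n with hα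
  set β : ℝ := 1 + σ * (θ - 1) / θ with hβ
  set d : ℝ := (n : ℝ) - 1 + α with hd
  have hnne : (n:ℝ) ≠ 0 := by positivity
  have hE1 : c - 1 + c * d = -β := by
    rw [hc, hd, hα, hβ, hpstar, hq]
    field_simp
    ring
  have hE2 : β * (q - 1) = d + q := by
    rw [hd, hα, hβ, hpstar, hq]
    field_simp
    ring
  -- the unit vector and radial profile
  set e : EuclideanSpace ℝ (Fin n) := EuclideanSpace.single ⟨0, by omega⟩ (1:ℝ) with he
  have hnorme : ‖e‖ = 1 := by simp [he]
  haveI : Nontrivial (EuclideanSpace ℝ (Fin n)) := by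
    refine nontrivial_of_ne e 0 fun h => ?_
    rw [h] at hnorme; simp at hnorme
  set U : ℝ → ℝ := fun r => u (r • e) with hU
  have hUx : ∀ x : EuclideanSpace ℝ (Fin n), u x = U ‖x‖ := fun x =>
    hrad x _ (by rw [norm_smul, hnorme, Real.norm_eq_abs,
      abs_of_nonneg (norm_nonneg x), mul_one])
  set ρ : ℝ → ℝ := fun s => R * (1 + (s/R) ^ (1-q)) ^ c with hρ
  set φ : ℝ → ℝ := fun r => R * ((r/R) ^ (1-q) - 1) ^ c with hφ
  set φd : ℝ → ℝ := fun r => ((r/R) ^ (1-q) - 1) ^ (c - 1) * (r/R) ^ (-q) with hφd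
  set F : ℝ → ℝ := fun s => s ^ α * U (ρ s) ^ σ with hF
  set G : ℝ → ℝ := fun r => r ^ α * U r ^ σ / ((q - 1) * logq q (R / r)) ^ β with hG
  -- positivity on Ioo 0 R
  have ht_pos : ∀ r ∈ Ioo (0:ℝ) R, 0 < (r/R) ^ (1-q) - 1 := by
    intro r hr
    have hw : 0 < r / R := div_pos hr.1 hR
    have hw1 : r / R < 1 := (div_lt_one hR).2 hr.2
    have := (Real.one_lt_rpow_iff_of_pos hw).2 (Or.inr ⟨hw1, h1q⟩)
    linarith
  have hφ_pos : ∀ r ∈ Ioo (0:ℝ) R, 0 < φ r := fun r hr =>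
    mul_pos hR (Real.rpow_pos_of_pos (ht_pos r hr) c)
  have hφd_pos : ∀ r ∈ Ioo (0:ℝ) R, 0 < φd r := fun r hr =>
    mul_pos (Real.rpow_pos_of_pos (ht_pos r hr) _)
      (Real.rpow_pos_of_pos (div_pos hr.1 hR) _)
  have hρφ : ∀ r ∈ Ioo (0:ℝ) R, ρ (φ r) = r := by
    intro r hr
    have hw : 0 < r / R := div_pos hr.1 hR
    have ht := ht_pos r hr
    simp only [hρ, hφ]
    rw [mul_div_cancel_left₀ _ hR.ne', ← Real.rpow_mul ht.le, hc1q, Real.rpow_one,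
      show (1:ℝ) + ((r/R) ^ (1-q) - 1) = (r/R) ^ (1-q) by ring,
      ← Real.rpow_mul hw.le, hc1q', Real.rpow_one]
    field_simp
  have hφρ : ∀ s : ℝ, 0 < s → φ (ρ s) = s := by
    intro s hs
    have hw : 0 < s / R := div_pos hs hR
    have hw2 : 0 < (s/R) ^ (1-q) := Real.rpow_pos_of_pos hw _
    have hb : (0:ℝ) ≤ 1 + (s/R) ^ (1-q) := by linarith
    simp only [hφ, hρ]
    rw [mul_div_cancel_left₀ _ hR.ne', ← Real.rpow_mul hb, hc1q, Real.rpow_one,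
      add_sub_cancel_left, ← Real.rpow_mul hw.le, hc1q', Real.rpow_one]
    field_simp
  have hmono : InjOn φ (Ioo 0 R) := by
    intro a ha b hb hab
    rw [← hρφ a ha, ← hρφ b hb, hab]
  have himg : φ '' Ioo 0 R = Ioi 0 := by
    apply Subset.antisymm
    · rintro s ⟨r, hr, rfl⟩
      exact hφ_pos r hr
    · intro s hs
      have hs' : (0:ℝ) < s := hs
      have hw2 : 0 < (s/R) ^ (1-q) := Real.rpow_pos_of_pos (div_pos hs' hR) _
      refine ⟨ρ s, ⟨?_, ?_⟩, hφρ s hs'⟩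
      · exact mul_pos hR (Real.rpow_pos_of_pos (by linarith) c)
      · have h1 : (1 + (s/R) ^ (1-q)) ^ c < 1 :=
          Real.rpow_lt_one_of_one_lt_of_neg (by linarith) hcneg
        calc ρ s = R * (1 + (s/R) ^ (1-q)) ^ c := rfl
          _ < R * 1 := by
              exact mul_lt_mul_of_pos_left h1 hR
          _ = R := mul_one R
  have hderiv : ∀ r ∈ Ioo (0:ℝ) R, HasDerivWithinAt φ (φd r) (Ioo 0 R) r := by
    intro r hr
    have hw : 0 < r / R := div_pos hr.1 hR
    have ht := ht_pos r hr
    have h1 : HasDerivAt (fun x : ℝ => x / R) (1/R) r := by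
      simpa using (hasDerivAt_id r).div_const R
    have h2 : HasDerivAt (fun x : ℝ => (x / R) ^ (1-q))
        (((1-q) * (r/R) ^ (1-q-1)) * (1/R)) r :=
      by have := (Real.hasDerivAt_rpow_const (p := 1-q) (Or.inl hw.ne')).comp r h1; exact this
    have h3 : HasDerivAt (fun x : ℝ => (x / R) ^ (1-q) - 1)
        (((1-q) * (r/R) ^ (1-q-1)) * (1/R)) r := h2.sub_const 1
    have h4 : HasDerivAt (fun w : ℝ => w ^ c)
        (c * ((r/R) ^ (1-q) - 1) ^ (c-1)) ((r/R) ^ (1-q) - 1) :=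
      Real.hasDerivAt_rpow_const (Or.inl ht.ne')
    have h5 := (h4.comp r h3).const_mul R
    have heq : R * (c * ((r/R) ^ (1-q) - 1) ^ (c-1) * ((1-q) * (r/R) ^ (1-q-1) * (1/R)))
        = φd r := by
      have hexp : (1:ℝ) - q - 1 = -q := by ring
      rw [hexp]
      simp only [hφd]
      calc R * (c * ((r/R) ^ (1-q) - 1) ^ (c-1) * ((1-q) * (r/R) ^ (-q) * (1/R)))
          = (c * (1-q)) * (R * (1/R)) * (((r/R) ^ (1-q) - 1) ^ (c-1) * (r/R) ^ (-q)) := by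
            ring
        _ = _ := by rw [hc1q, mul_one_div, div_self hR.ne']; ring
    have h6 : HasDerivAt φ (φd r) r := heq ▸ h5
    exact h6.hasDerivWithinAt
  -- key weight identity
  have hkey : ∀ r ∈ Ioo (0:ℝ) R, (q-1) * logq q (R/r)
      = ((r/R) ^ (1-q) - 1) * (r/R) ^ (q-1) := by
    intro r hr
    have hw : 0 < r/R := div_pos hr.1 hR
    have h1 : (R/r) ^ (1-q) = (r/R) ^ (q-1) := by
      rw [show R / r = (r/R)⁻¹ by rw [inv_div], ← Real.rpow_neg_one (r/R),
        ← Real.rpow_mul hw.le, show (-1 : ℝ) * (1-q) = q - 1 by ring]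
    have h2 : (r/R) ^ (1-q) * (r/R) ^ (q-1) = 1 := by
      rw [← Real.rpow_add hw]; norm_num
    rw [logq, h1]
    field_simp
    linear_combination (q - 1) * h2
  have hdim : Module.finrank ℝ (EuclideanSpace ℝ (Fin n)) = n := finrank_euclideanSpace_fin
  -- reduce LHS
  have hL1 : (∫ y : EuclideanSpace ℝ (Fin n), ‖y‖ ^ α * v y ^ σ)
      = ∫ y : EuclideanSpace ℝ (Fin n), F ‖y‖ := by
    refine integral_congr_ae ?_
    have h0 : ∀ᵐ y : EuclideanSpace ℝ (Fin n), y ≠ 0 := by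
      have hs : {y : EuclideanSpace ℝ (Fin n) | ¬ y ≠ 0} = {0} := by ext; simp
      rw [ae_iff, hs]
      exact measure_singleton 0
    filter_upwards [h0] with y hy
    have hy0 : 0 < ‖y‖ := norm_pos_iff.2 hy
    have hsc : 0 ≤ R * (1 + (‖y‖ / R) ^ (1 - q)) ^ (1 / (1 - q)) * ‖y‖⁻¹ := by positivity
    have hninv : ‖invTrans n q R y‖ = ρ ‖y‖ := by
      rw [invTrans, norm_smul, Real.norm_eq_abs, abs_of_nonneg hsc]
      simp only [hρ]
      rw [hc]
      field_simp
    simp only [hF]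
    rw [hv y hy, hUx (invTrans n q R y), hninv]
  have hL2 := integral_fun_norm_addHaar
    (volume : Measure (EuclideanSpace ℝ (Fin n))) F
  rw [hdim] at hL2
  -- reduce RHS
  have hR1 : (∫ x in Metric.ball (0 : EuclideanSpace ℝ (Fin n)) R,
        ‖x‖ ^ α * u x ^ σ / ((q - 1) * logq q (R / ‖x‖)) ^ β)
      = ∫ x in Metric.ball (0 : EuclideanSpace ℝ (Fin n)) R, G ‖x‖ := by
    refine setIntegral_congr_fun measurableSet_ball fun x _ => ?_
    simp only [hG]
    rw [hUx x]
  have hR2 : (∫ x in Metric.ball (0 : EuclideanSpace ℝ (Fin n)) R, G ‖x‖)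
      = ∫ x : EuclideanSpace ℝ (Fin n), Set.indicator (Iio R) G ‖x‖ := by
    rw [← integral_indicator measurableSet_ball]
    refine integral_congr_ae (Filter.Eventually.of_forall fun x => ?_)
    show Set.indicator (Metric.ball (0 : EuclideanSpace ℝ (Fin n)) R)
      (fun x => G ‖x‖) x = Set.indicator (Iio R) G ‖x‖
    by_cases h : ‖x‖ < R
    · rw [Set.indicator_of_mem (mem_ball_zero_iff.2 h), Set.indicator_of_mem (mem_Iio.2 h)]
    · rw [Set.indicator_of_notMem (fun hx => h (mem_ball_zero_iff.1 hx)),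
        Set.indicator_of_notMem (fun hx => h (mem_Iio.1 hx))]
  have hR3 := integral_fun_norm_addHaar
    (volume : Measure (EuclideanSpace ℝ (Fin n))) (Set.indicator (Iio R) G)
  rw [hdim] at hR3
  have hI2 : (∫ s in Ioi (0:ℝ), s ^ (n-1) • Set.indicator (Iio R) G s)
      = ∫ r in Ioo (0:ℝ) R, r ^ (n-1) • G r := by
    rw [setIntegral_congr_fun (g := fun s => Set.indicator (Iio R)
        (fun s' => s' ^ (n-1) • G s') s) measurableSet_Ioi ?_,
      setIntegral_indicator measurableSet_Iio, Ioi_inter_Iio]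
    intro s _
    show s ^ (n-1) • Set.indicator (Iio R) G s
      = Set.indicator (Iio R) (fun s' => s' ^ (n-1) • G s') s
    by_cases h : s ∈ Iio R
    · rw [Set.indicator_of_mem h, Set.indicator_of_mem h]
    · rw [Set.indicator_of_notMem h, Set.indicator_of_notMem h, smul_zero]
  -- change of variables
  have hcast : ((n - 1 : ℕ) : ℝ) = (n:ℝ) - 1 := by
    rw [Nat.cast_sub (by omega : 1 ≤ n), Nat.cast_one]
  have hCoV : (∫ s in Ioi (0:ℝ), s ^ (n-1) • F s)
      = ∫ r in Ioo (0:ℝ) R, r ^ (n-1) • G r := by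
    rw [← himg, integral_image_eq_integral_abs_deriv_smul measurableSet_Ioo hderiv hmono]
    refine setIntegral_congr_fun measurableSet_Ioo fun r hr => ?_
    have hw : 0 < r / R := div_pos hr.1 hR
    have ht := ht_pos r hr
    have hφp : 0 < R * ((r/R) ^ (1-q) - 1) ^ c :=
      mul_pos hR (Real.rpow_pos_of_pos ht c)
    simp only [smul_eq_mul, hF, hG]
    rw [hρφ r hr, abs_of_pos (hφd_pos r hr), hkey r hr]
    simp only [hφd, hφ]
    rw [← Real.rpow_natCast (R * ((r/R) ^ (1-q) - 1) ^ c) (n-1),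
      ← Real.rpow_natCast r (n-1), hcast]
    have e1 : (R * ((r/R) ^ (1-q) - 1) ^ c) ^ ((n:ℝ)-1)
          * ((R * ((r/R) ^ (1-q) - 1) ^ c) ^ α * U r ^ σ)
        = (R * ((r/R) ^ (1-q) - 1) ^ c) ^ d * U r ^ σ := by
      rw [hd, Real.rpow_add hφp]; ring
    have e2 : r ^ ((n:ℝ)-1) * (r ^ α * U r ^ σ
          / (((r/R) ^ (1-q) - 1) * (r/R) ^ (q-1)) ^ β)
        = r ^ d * (U r ^ σ / (((r/R) ^ (1-q) - 1) * (r/R) ^ (q-1)) ^ β) := by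
      rw [hd, Real.rpow_add hr.1]; ring
    rw [e1, e2]
    exact pw_aux r R ((r/R) ^ (1-q) - 1) q c β d (U r ^ σ) hr.1 hR ht hE1 hE2
  calc (∫ y : EuclideanSpace ℝ (Fin n), ‖y‖ ^ α * v y ^ σ)
      = ∫ y : EuclideanSpace ℝ (Fin n), F ‖y‖ := hL1
    _ = n • (volume (Metric.ball (0 : EuclideanSpace ℝ (Fin n)) 1)).toReal •
          ∫ s in Ioi (0:ℝ), s ^ (n-1) • F s := hL2
    _ = n • (volume (Metric.ball (0 : EuclideanSpace ℝ (Fin n)) 1)).toReal •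
          ∫ s in Ioi (0:ℝ), s ^ (n-1) • Set.indicator (Iio R) G s := by
        rw [hCoV, hI2]
    _ = ∫ x : EuclideanSpace ℝ (Fin n), Set.indicator (Iio R) G ‖x‖ := hR3.symm
    _ = ∫ x in Metric.ball (0 : EuclideanSpace ℝ (Fin n)) R, G ‖x‖ := hR2.symm
    _ = _ := hR1.symm
end

section
/- Let n ≥ 2, 1 < p < n, θ > 1, q = 1 + ((n−p)/p)(θ/(θ−1)), R > 0. For a radially symmetric C^1 function u on B_R with compact support, setting v(y) = u(x) with y = R(−(q−1)log_q(|x|/R))^{−1/(q−1)} x/|x|, one has ∫_{R^n} |y|^{nθ/p − n} |∇v(y)|^θ dy = ∫_{B_R} |x|^{nθ/p − n} |∇_r u(x)|^θ dx. -/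
open MeasureTheory

open Set Real Filter

noncomputable section helpers

/-- The radial profile of the inverse transformation. -/
def psiAux (R q s : ℝ) : ℝ := R * (1 + (s / R) ^ (1 - q)) ^ (1 / (1 - q))

variable {R q : ℝ}

lemma psiAux_pos (hR : 0 < R) {s : ℝ} (hs : 0 < s) : 0 < psiAux R q s :=
  mul_pos hR (Real.rpow_pos_of_pos (by positivity) _)

lemma psiAux_lt (hR : 0 < R) (hq1 : 1 < q) {s : ℝ} (hs : 0 < s) : psiAux R q s < R := by
  have h1 : 1 < 1 + (s / R) ^ (1 - q) := by
    have : (0:ℝ) < (s / R) ^ (1 - q) := Real.rpow_pos_of_pos (div_pos hs hR) _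
    linarith
  have h2 : (1 + (s / R) ^ (1 - q)) ^ (1 / (1 - q)) < 1 :=
    Real.rpow_lt_one_of_one_lt_of_neg h1 (one_div_neg.2 (by linarith))
  calc psiAux R q s = R * (1 + (s / R) ^ (1 - q)) ^ (1 / (1 - q)) := rfl
  _ < R * 1 := (mul_lt_mul_iff_right₀ hR).2 h2
  _ = R := mul_one R

lemma psiAux_hasDerivAt (hR : 0 < R) (hq1 : 1 < q) {s : ℝ} (hs : 0 < s) :
    HasDerivAt (psiAux R q) ((psiAux R q s / s) ^ q) s := by
  have h1q' : (1 - q) ≠ 0 := by linarith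
  have hsR : 0 < s / R := div_pos hs hR
  have hAs : (0:ℝ) < 1 + (s / R) ^ (1 - q) := by positivity
  have h1 : HasDerivAt (fun t : ℝ => t / R) (1 / R) s := by
    simpa using (hasDerivAt_id s).div_const R
  have h2 : HasDerivAt (fun t : ℝ => (t / R) ^ (1 - q))
      ((1 - q) * (s / R) ^ (1 - q - 1) * (1 / R)) s :=
    by have := (Real.hasDerivAt_rpow_const (p := 1 - q) (Or.inl (ne_of_gt hsR))).comp s h1; exact this
  have h3 : HasDerivAt (fun t : ℝ => 1 + (t / R) ^ (1 - q))
      ((1 - q) * (s / R) ^ (1 - q - 1) * (1 / R)) s := h2.const_add 1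
  have h4 : HasDerivAt (fun t : ℝ => (1 + (t / R) ^ (1 - q)) ^ (1 / (1 - q)))
      ((1 / (1 - q)) * (1 + (s / R) ^ (1 - q)) ^ (1 / (1 - q) - 1) *
        ((1 - q) * (s / R) ^ (1 - q - 1) * (1 / R))) s :=
    by have := (Real.hasDerivAt_rpow_const (p := 1 / (1 - q)) (Or.inl (ne_of_gt hAs))).comp s h3; exact this
  have h5 := h4.const_mul R
  have key : R * ((1 / (1 - q)) * (1 + (s / R) ^ (1 - q)) ^ (1 / (1 - q) - 1) *
      ((1 - q) * (s / R) ^ (1 - q - 1) * (1 / R))) = (psiAux R q s / s) ^ q := by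
    have e1 : psiAux R q s / s = (1 + (s / R) ^ (1 - q)) ^ (1 / (1 - q)) * (s / R)⁻¹ := by
      unfold psiAux
      field_simp
    rw [e1, Real.mul_rpow (Real.rpow_nonneg hAs.le _) (inv_nonneg.2 hsR.le),
      ← Real.rpow_mul hAs.le, Real.inv_rpow hsR.le, ← Real.rpow_neg hsR.le,
      show (1 / (1 - q) * q : ℝ) = 1 / (1 - q) - 1 by field_simp; ring,
      show (-q : ℝ) = 1 - q - 1 by ring]
    field_simp
  rw [← key]
  exact h5

lemma psiAux_image (hR : 0 < R) (hq1 : 1 < q) : psiAux R q '' Ioi 0 = Ioo 0 R := by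
  have h1q : (1:ℝ) - q < 0 := by linarith
  have h1q' : (1 - q) ≠ 0 := ne_of_lt h1q
  apply Subset.antisymm
  · rintro _ ⟨s, hs, rfl⟩
    exact ⟨psiAux_pos hR hs, psiAux_lt hR hq1 hs⟩
  · rintro t ⟨ht0, htR⟩
    have htR1 : t / R < 1 := (div_lt_one hR).2 htR
    have ht1 : 1 < (t / R) ^ (1 - q) :=
      (Real.one_lt_rpow_iff_of_pos (div_pos ht0 hR)).2 (Or.inr ⟨htR1, h1q⟩)
    have hB0 : 0 < (t / R) ^ (1 - q) - 1 := by linarith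
    refine ⟨R * ((t / R) ^ (1 - q) - 1) ^ (1 / (1 - q)),
      Set.mem_Ioi.2 (mul_pos hR (Real.rpow_pos_of_pos hB0 _)), ?_⟩
    show R * (1 + (R * ((t / R) ^ (1 - q) - 1) ^ (1 / (1 - q)) / R) ^ (1 - q)) ^ (1 / (1 - q)) = t
    have hc : R * ((t / R) ^ (1 - q) - 1) ^ (1 / (1 - q)) / R
        = ((t / R) ^ (1 - q) - 1) ^ (1 / (1 - q)) := by
      field_simp
    rw [hc, one_div, Real.rpow_inv_rpow hB0.le h1q']
    have hd : 1 + ((t / R) ^ (1 - q) - 1) = (t / R) ^ (1 - q) := by ring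
    rw [hd, Real.rpow_rpow_inv (div_pos ht0 hR).le h1q']
    field_simp

lemma psiAux_injOn (hR : 0 < R) (hq1 : 1 < q) : InjOn (psiAux R q) (Ioi 0) := by
  have hmono : StrictMonoOn (psiAux R q) (Ioi 0) := by
    apply strictMonoOn_of_deriv_pos (convex_Ioi 0)
    · exact fun s hs => (psiAux_hasDerivAt hR hq1 hs).continuousAt.continuousWithinAt
    · intro s hs
      rw [interior_Ioi] at hs
      rw [(psiAux_hasDerivAt hR hq1 hs).deriv]
      exact Real.rpow_pos_of_pos (div_pos (psiAux_pos hR hs) hs) q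
  exact hmono.injOn

/-- The key algebraic identity for the change of variables. -/
lemma keyAlg {ψs s θ β K : ℝ} (hψs : 0 < ψs) (hs : 0 < s) (hβ : β = q * (θ - 1)) (hK : 0 ≤ K) :
    (ψs / s) ^ q * (ψs ^ β * K) = s ^ β * (K * (ψs / s) ^ (q * θ)) := by
  rw [Real.div_rpow hψs.le hs.le, Real.div_rpow hψs.le hs.le,
    show q * θ = q + β by rw [hβ]; ring, Real.rpow_add hψs, Real.rpow_add hs]
  have h1 : s ^ q ≠ 0 := (Real.rpow_pos_of_pos hs q).ne'
  have h2 : s ^ β ≠ 0 := (Real.rpow_pos_of_pos hs β).ne'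
  field_simp

variable {E : Type*} [NormedAddCommGroup E] [InnerProductSpace ℝ E] [CompleteSpace E]

/-- Derivative of the norm on a real inner product space, away from the origin. -/
lemma hasFDerivAt_norm_aux {x : E} (hx : x ≠ 0) :
    HasFDerivAt (fun y : E => ‖y‖) (innerSL ℝ ((‖x‖⁻¹ : ℝ) • x)) x := by
  have hsq : HasFDerivAt (fun y : E => ‖y‖ ^ 2) (2 • innerSL ℝ x) x :=
    (hasStrictFDerivAt_norm_sq x).hasFDerivAt
  have hx0 : ‖x‖ ≠ 0 := norm_ne_zero_iff.2 hx
  have hns : (‖x‖ : ℝ) ^ 2 ≠ 0 := pow_ne_zero _ hx0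
  have hsqrt : HasDerivAt Real.sqrt (1 / (2 * Real.sqrt (‖x‖ ^ 2))) (‖x‖ ^ 2) :=
    Real.hasDerivAt_sqrt hns
  have h := hsqrt.comp_hasFDerivAt x hsq
  have hfun : (Real.sqrt ∘ fun y : E => ‖y‖ ^ 2) = fun y : E => ‖y‖ := by
    funext y
    simp [Function.comp, Real.sqrt_sq (norm_nonneg y)]
  rw [hfun] at h
  have heq : innerSL ℝ ((‖x‖⁻¹ : ℝ) • x)
      = (1 / (2 * Real.sqrt (‖x‖ ^ 2))) • (2 • innerSL ℝ x) := by
    ext y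
    rw [Real.sqrt_sq (norm_nonneg x)]
    simp only [innerSL_apply_apply, ContinuousLinearMap.coe_smul', Pi.smul_apply, smul_eq_mul,
      real_inner_smul_left]
    field_simp
    ring
  rw [heq]
  exact h

/-- Gradient of a radial function, away from the origin. -/
lemma radial_hasGradientAt {g : ℝ → ℝ} {c : ℝ} {x : E} (hx : x ≠ 0)
    (hg : HasDerivAt g c ‖x‖) (h : E → ℝ) (hh : ∀ᶠ y in nhds x, h y = g ‖y‖) :
    HasGradientAt h (c • ((‖x‖⁻¹ : ℝ) • x)) x := by
  have h1 : HasFDerivAt (fun y : E => g ‖y‖) (c • innerSL ℝ ((‖x‖⁻¹ : ℝ) • x)) x :=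
    hg.comp_hasFDerivAt x (hasFDerivAt_norm_aux hx)
  have h2 : HasFDerivAt h (c • innerSL ℝ ((‖x‖⁻¹ : ℝ) • x)) x :=
    h1.congr_of_eventuallyEq hh
  have h3 : (InnerProductSpace.toDual ℝ E) (c • ((‖x‖⁻¹ : ℝ) • x))
      = c • innerSL ℝ ((‖x‖⁻¹ : ℝ) • x) := by
    ext y
    simp [real_inner_smul_left]
  exact hasGradientAt_iff_hasFDerivAt.mpr (by rw [h3]; exact h2)

end helpers

/-- Change of variables for the gradient term: with `q = 1 + ((n−p)/p)(θ/(θ−1))` and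
    `v(y) = u(x)` under `y = R(−(q−1)log_q(‖x‖/R))^{−1/(q−1)} x/‖x‖`, for radial `C¹`
    compactly supported `u` on `B_R`:
    `∫_{ℝⁿ} ‖y‖^{nθ/p−n} |∇v(y)|^θ dy = ∫_{B_R} ‖x‖^{nθ/p−n} |∇_r u(x)|^θ dx`. -/
theorem stmt_15 (n : ℕ) (hn : 2 ≤ n) (p θ R q : ℝ) (hp1 : 1 < p) (hpn : p < n)
    (hθ : 1 < θ) (hR : 0 < R)
    (hq : q = 1 + (((n : ℝ) - p) / p) * (θ / (θ - 1)))
    (u : EuclideanSpace ℝ (Fin n) → ℝ) (hu : ContDiff ℝ 1 u)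
    (hsupp : HasCompactSupport u)
    (hsuppR : tsupport u ⊆ Metric.ball (0 : EuclideanSpace ℝ (Fin n)) R)
    (hrad : ∀ x y : EuclideanSpace ℝ (Fin n), ‖x‖ = ‖y‖ → u x = u y)
    (v : EuclideanSpace ℝ (Fin n) → ℝ)
    (hv : ∀ y : EuclideanSpace ℝ (Fin n), y ≠ 0 → v y = u (invTrans n q R y)) :
    ∫ y : EuclideanSpace ℝ (Fin n), ‖y‖ ^ ((n : ℝ) * θ / p - n) * ‖gradient v y‖ ^ θ
      = ∫ x in Metric.ball (0 : EuclideanSpace ℝ (Fin n)) R,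
          ‖x‖ ^ ((n : ℝ) * θ / p - n) *
            ‖((inner ℝ ((‖x‖⁻¹) • x) (gradient u x) : ℝ)) • ((‖x‖⁻¹) • x)‖ ^ θ := by
  classical
  have hp0 : (0:ℝ) < p := lt_trans one_pos hp1
  have hθ1 : (0:ℝ) < θ - 1 := sub_pos.2 hθ
  have hθ0 : (0:ℝ) < θ := lt_trans one_pos hθ
  have hnp : (0:ℝ) < (n:ℝ) - p := sub_pos.2 hpn
  have hq1 : 1 < q := by
    rw [hq]
    have h1 : 0 < ((n:ℝ) - p) / p := div_pos hnp hp0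
    have h2 : 0 < θ / (θ - 1) := div_pos hθ0 hθ1
    nlinarith
  have hqθ : q * (θ - 1) = (n:ℝ) * θ / p - 1 := by
    rw [hq]
    field_simp
    ring
  have hn0 : 0 < n := by omega
  set α : ℝ := (n:ℝ) * θ / p - n with hα
  set ψ : ℝ → ℝ := psiAux R q with hψ_def
  -- the radial profile of u
  set e : EuclideanSpace ℝ (Fin n) := EuclideanSpace.single (⟨0, hn0⟩ : Fin n) (1:ℝ) with he_def
  have he : ‖e‖ = 1 := by simp [he_def]
  have hene : e ≠ 0 := by
    intro h
    rw [h] at he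
    simp at he
  haveI : Nontrivial (EuclideanSpace ℝ (Fin n)) := ⟨⟨e, 0, hene⟩⟩
  set f : ℝ → ℝ := fun r => u (r • e) with hf_def
  have hf_cd : ContDiff ℝ 1 f := hu.comp (contDiff_id.smul contDiff_const)
  have hf_diff : ∀ r, HasDerivAt f (deriv f r) r := fun r =>
    ((hf_cd.differentiable one_ne_zero) r).hasDerivAt
  have hfu : ∀ x : EuclideanSpace ℝ (Fin n), u x = f ‖x‖ := by
    intro x
    apply hrad
    rw [norm_smul, he, Real.norm_eq_abs, abs_of_nonneg (norm_nonneg x), mul_one]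
  -- the two radial integrands
  set Ga : ℝ → ℝ := fun s => s ^ α * |deriv f (ψ s) * (ψ s / s) ^ q| ^ θ with hGa
  set Gb : ℝ → ℝ := fun r => r ^ α * |deriv f r| ^ θ with hGb
  -- gradient of u in the radial direction
  have hgu : ∀ x : EuclideanSpace ℝ (Fin n), x ≠ 0 →
      ‖((inner ℝ ((‖x‖⁻¹ : ℝ) • x) (gradient u x) : ℝ)) • ((‖x‖⁻¹ : ℝ) • x)‖ = |deriv f ‖x‖| := by
    intro x hx
    have hx0 : ‖x‖ ≠ 0 := norm_ne_zero_iff.2 hx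
    have hgrad : HasGradientAt u ((deriv f ‖x‖) • ((‖x‖⁻¹ : ℝ) • x)) x :=
      radial_hasGradientAt hx (hf_diff ‖x‖) u (Eventually.of_forall hfu)
    rw [hgrad.gradient]
    have hux : ‖(‖x‖⁻¹ : ℝ) • x‖ = 1 := by
      rw [norm_smul, Real.norm_eq_abs, abs_of_nonneg (inv_nonneg.2 (norm_nonneg x)),
        inv_mul_cancel₀ hx0]
    have hinner : (inner ℝ ((‖x‖⁻¹ : ℝ) • x) ((deriv f ‖x‖) • ((‖x‖⁻¹ : ℝ) • x)) : ℝ)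
        = deriv f ‖x‖ := by
      rw [real_inner_smul_right, real_inner_self_eq_norm_sq, hux]
      ring
    rw [hinner, norm_smul, hux, Real.norm_eq_abs, mul_one]
  -- values and gradient of v
  have hvf : ∀ z : EuclideanSpace ℝ (Fin n), z ≠ 0 → v z = f (ψ ‖z‖) := by
    intro z hz
    have hz0 : 0 < ‖z‖ := norm_pos_iff.2 hz
    rw [hv z hz, hfu]
    congr 1
    have hψp := psiAux_pos (q := q) hR hz0
    rw [invTrans, norm_smul, Real.norm_eq_abs]
    have : R * (1 + (‖z‖ / R) ^ (1 - q)) ^ (1 / (1 - q)) * ‖z‖⁻¹ = ψ ‖z‖ * ‖z‖⁻¹ := rfl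
    rw [this, abs_of_nonneg (by positivity), mul_assoc, inv_mul_cancel₀ (ne_of_gt hz0), mul_one]
  have hgv : ∀ y : EuclideanSpace ℝ (Fin n), y ≠ 0 →
      ‖gradient v y‖ = |deriv f (ψ ‖y‖) * (ψ ‖y‖ / ‖y‖) ^ q| := by
    intro y hy
    have hy0 : 0 < ‖y‖ := norm_pos_iff.2 hy
    have hcomp : HasDerivAt (fun s => f (ψ s)) (deriv f (ψ ‖y‖) * (ψ ‖y‖ / ‖y‖) ^ q) ‖y‖ :=
      (hf_diff (ψ ‖y‖)).comp ‖y‖ (psiAux_hasDerivAt hR hq1 hy0)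
    have hev : ∀ᶠ z in nhds y, v z = (fun s => f (ψ s)) ‖z‖ := by
      filter_upwards [isOpen_compl_singleton.mem_nhds (by simpa using hy)] with z hz
      exact hvf z (by simpa using hz)
    have hgrad := radial_hasGradientAt hy hcomp v hev
    rw [hgrad.gradient, norm_smul, norm_smul, Real.norm_eq_abs, Real.norm_eq_abs,
      abs_of_nonneg (inv_nonneg.2 (norm_nonneg y)), inv_mul_cancel₀ (ne_of_gt hy0), mul_one]
  -- a.e. rewriting of both integrands
  have h00 : (volume : Measure (EuclideanSpace ℝ (Fin n)))
      {(0 : EuclideanSpace ℝ (Fin n))} = 0 := measure_singleton 0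
  have hae : ∀ᵐ y : EuclideanSpace ℝ (Fin n), y ≠ 0 := by
    filter_upwards [compl_mem_ae_iff.2 h00] with y hy
    simpa using hy
  have hL1 : ∫ y : EuclideanSpace ℝ (Fin n), ‖y‖ ^ α * ‖gradient v y‖ ^ θ
      = ∫ y : EuclideanSpace ℝ (Fin n), Ga ‖y‖ := by
    apply integral_congr_ae
    filter_upwards [hae] with y hy
    rw [hgv y hy, hGa]
  have hR1 : (∫ x in Metric.ball (0 : EuclideanSpace ℝ (Fin n)) R,
        ‖x‖ ^ α * ‖((inner ℝ ((‖x‖⁻¹ : ℝ) • x) (gradient u x) : ℝ)) • ((‖x‖⁻¹ : ℝ) • x)‖ ^ θ)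
      = ∫ x : EuclideanSpace ℝ (Fin n), (Iio R).indicator Gb ‖x‖ := by
    rw [← integral_indicator measurableSet_ball]
    apply integral_congr_ae
    filter_upwards [hae] with x hx
    by_cases hxR : ‖x‖ < R
    · rw [Set.indicator_of_mem (mem_ball_zero_iff.2 hxR),
        Set.indicator_of_mem (show ‖x‖ ∈ Iio R from hxR), hGb, hgu x hx]
    · rw [Set.indicator_of_notMem (fun h => hxR (mem_ball_zero_iff.1 h)),
        Set.indicator_of_notMem (show ‖x‖ ∉ Iio R from hxR)]
  -- polar coordinates
  have hdim : Module.finrank ℝ (EuclideanSpace ℝ (Fin n)) = n := by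
    simp [finrank_euclideanSpace]
  have hpolar1 : ∫ y : EuclideanSpace ℝ (Fin n), Ga ‖y‖
      = n • ((volume (Metric.ball (0 : EuclideanSpace ℝ (Fin n)) 1)).toReal •
          ∫ s in Ioi (0:ℝ), s ^ (n - 1) • Ga s) := by
    rw [integral_fun_norm_addHaar (volume : Measure (EuclideanSpace ℝ (Fin n))) Ga, hdim]
    rfl
  have hpolar2 : ∫ x : EuclideanSpace ℝ (Fin n), (Iio R).indicator Gb ‖x‖
      = n • ((volume (Metric.ball (0 : EuclideanSpace ℝ (Fin n)) 1)).toReal •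
          ∫ s in Ioi (0:ℝ), s ^ (n - 1) • (Iio R).indicator Gb s) := by
    rw [integral_fun_norm_addHaar (volume : Measure (EuclideanSpace ℝ (Fin n)))
      ((Iio R).indicator Gb), hdim]
    rfl
  -- reduce the one-dimensional integrals
  have hstep1 : ∫ s in Ioi (0:ℝ), s ^ (n - 1) • (Iio R).indicator Gb s
      = ∫ s in Ioo (0:ℝ) R, s ^ (n - 1) • Gb s := by
    have : ∀ s ∈ Ioi (0:ℝ), s ^ (n - 1) • (Iio R).indicator Gb s
        = (Iio R).indicator (fun t => t ^ (n - 1) • Gb t) s := by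
      intro s _
      by_cases h : s ∈ Iio R
      · rw [Set.indicator_of_mem h, Set.indicator_of_mem h]
      · rw [Set.indicator_of_notMem h, Set.indicator_of_notMem h, smul_zero]
    rw [setIntegral_congr_fun measurableSet_Ioi this, integral_indicator measurableSet_Iio,
      Measure.restrict_restrict measurableSet_Iio, Set.Iio_inter_Ioi]
  have hstep2 : ∫ s in Ioo (0:ℝ) R, s ^ (n - 1) • Gb s
      = ∫ s in Ioi (0:ℝ), |(ψ s / s) ^ q| • (ψ s ^ (n - 1) • Gb (ψ s)) := by
    rw [← psiAux_image hR hq1]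
    exact integral_image_eq_integral_abs_deriv_smul measurableSet_Ioi
      (fun s hs => (psiAux_hasDerivAt hR hq1 hs).hasDerivWithinAt)
      (psiAux_injOn hR hq1) _
  have hstep3 : ∫ s in Ioi (0:ℝ), |(ψ s / s) ^ q| • (ψ s ^ (n - 1) • Gb (ψ s))
      = ∫ s in Ioi (0:ℝ), s ^ (n - 1) • Ga s := by
    apply setIntegral_congr_fun measurableSet_Ioi
    intro s hs
    have hs0 : (0:ℝ) < s := hs
    have hψs : 0 < ψ s := psiAux_pos hR hs0
    have hw : 0 < ψ s / s := div_pos hψs hs0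
    have habs : |(ψ s / s) ^ q| = (ψ s / s) ^ q := abs_of_pos (Real.rpow_pos_of_pos hw q)
    have habs2 : |deriv f (ψ s) * (ψ s / s) ^ q| ^ θ
        = |deriv f (ψ s)| ^ θ * (ψ s / s) ^ (q * θ) := by
      rw [abs_mul, abs_of_pos (Real.rpow_pos_of_pos hw q),
        Real.mul_rpow (abs_nonneg _) (Real.rpow_pos_of_pos hw q).le, ← Real.rpow_mul hw.le]
    have hnat : ∀ t : ℝ, 0 < t → (t : ℝ) ^ (n - 1) = t ^ ((n:ℝ) - 1) := by
      intro t ht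
      rw [← Real.rpow_natCast t (n - 1)]
      congr 1
      push_cast [Nat.cast_sub (by omega : 1 ≤ n)]
      ring
    have hβ : (n:ℝ) - 1 + α = q * (θ - 1) := by
      rw [hα, hqθ]; ring
    have hcomb1 : ψ s ^ ((n:ℝ) - 1) * (ψ s ^ α * |deriv f (ψ s)| ^ θ)
        = ψ s ^ (q * (θ - 1)) * |deriv f (ψ s)| ^ θ := by
      rw [← mul_assoc, ← Real.rpow_add hψs, hβ]
    have hcomb2 : s ^ ((n:ℝ) - 1) * (s ^ α * (|deriv f (ψ s)| ^ θ * (ψ s / s) ^ (q * θ)))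
        = s ^ (q * (θ - 1)) * (|deriv f (ψ s)| ^ θ * (ψ s / s) ^ (q * θ)) := by
      rw [← mul_assoc, ← Real.rpow_add hs0, hβ]
    simp only [smul_eq_mul, hGa, hGb]
    rw [habs, habs2, hnat (ψ s) hψs, hnat s hs0, hcomb1, hcomb2]
    exact keyAlg hψs hs0 rfl (Real.rpow_nonneg (abs_nonneg _) θ)
  rw [hL1, hpolar1, hR1, hpolar2, hstep1, hstep2, hstep3]
end
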